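/- For any Banach space X, every bounded linear operator T ∈ L(X) with c(T) = 0 can be approximated in operator norm by Crawford number attaining operators: for each ε > 0 there exists S ∈ CNA(X) with ‖S − T‖ < ε and c(S) = 0. -/

import Mathlib

set_option maxHeartbeats 1000000


noncomputable def crawford {𝕜 : Type*} [RCLike 𝕜] {E : Type*} [NormedAddCommGroup E]
    [NormedSpace 𝕜 E] (T : E →L[𝕜] E) : ℝ :=
  sInf {r : ℝ | ∃ (x : E) (f : E →L[𝕜] 𝕜), ‖x‖ = 1 ∧ ‖f‖ = 1 ∧ f x = 1 ∧ r = ‖f (T x)‖}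

def CrawfordAttains {𝕜 : Type*} [RCLike 𝕜] {E : Type*} [NormedAddCommGroup E]
    [NormedSpace 𝕜 E] (T : E →L[𝕜] E) : Prop :=
  ∃ (x : E) (f : E →L[𝕜] 𝕜), ‖x‖ = 1 ∧ ‖f‖ = 1 ∧ f x = 1 ∧ crawford T = ‖f (T x)‖

theorem crawford_zero_approx_attaining
    {𝕜 : Type*} [RCLike 𝕜] {X : Type*} [NormedAddCommGroup X] [NormedSpace 𝕜 X]
    [CompleteSpace X] [Nontrivial X]
    (T : X →L[𝕜] X) (hT : crawford T = 0) :
    ∀ ε : ℝ, 0 < ε → ∃ S : X →L[𝕜] X,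
      ‖S - T‖ < ε ∧ crawford S = 0 ∧ CrawfordAttains S := by
  intro ε hε
  set A : Set ℝ :=
    {r : ℝ | ∃ (x : X) (f : X →L[𝕜] 𝕜), ‖x‖ = 1 ∧ ‖f‖ = 1 ∧ f x = 1 ∧ r = ‖f (T x)‖} with hA
  -- A is nonempty
  obtain ⟨z, hz⟩ := exists_ne (0 : X)
  have hznorm : ‖z‖ ≠ 0 := norm_ne_zero_iff.mpr hz
  set x₁ : X := ((‖z‖ : 𝕜))⁻¹ • z with hx₁def
  have hx₁ : ‖x₁‖ = 1 := by
    rw [hx₁def, norm_smul, norm_inv, RCLike.norm_ofReal, abs_of_nonneg (norm_nonneg z)]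
    field_simp
  obtain ⟨g, hg1, hg2⟩ := exists_dual_vector 𝕜 x₁ (by
    intro h; rw [h] at hx₁; norm_num at hx₁)
  have hgx : g x₁ = 1 := by rw [hg2, hx₁]; norm_num
  have hAne : A.Nonempty := ⟨‖g (T x₁)‖, x₁, g, hx₁, hg1, hgx, rfl⟩
  have hAbdd : BddBelow A := ⟨0, fun r ⟨x, f, _, _, _, hr⟩ => hr ▸ norm_nonneg _⟩
  -- extract a state with small value
  have hlt : sInf A < ε := by
    unfold crawford at hT; rw [← hA] at hT; rw [hT]; exact hε
  obtain ⟨r, hrA, hrε⟩ := (csInf_lt_iff hAbdd hAne).mp hlt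
  obtain ⟨x₀, f₀, hx₀, hf₀, hfx₀, hrval⟩ := hrA
  -- the perturbed operator
  set c : 𝕜 := f₀ (T x₀) with hc
  set S : X →L[𝕜] X := T - c • ContinuousLinearMap.id 𝕜 X with hS
  have hSx0 : S x₀ = T x₀ - c • x₀ := by
    rw [hS]; rfl
  have hSx : f₀ (S x₀) = 0 := by
    rw [hSx0, map_sub, map_smul, hfx₀, smul_eq_mul, mul_one, hc, sub_self]
  refine ⟨S, ?_, ?_, ?_⟩
  · have : S - T = -(c • ContinuousLinearMap.id 𝕜 X) := by rw [hS]; abel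
    rw [this, norm_neg]
    calc ‖c • ContinuousLinearMap.id 𝕜 X‖ ≤ ‖c‖ * ‖ContinuousLinearMap.id 𝕜 X‖ :=
          ContinuousLinearMap.opNorm_smul_le c _
      _ ≤ ‖c‖ * 1 := by
          gcongr; exact ContinuousLinearMap.norm_id_le
      _ = ‖c‖ := mul_one _
      _ < ε := by rw [hc, ← hrval]; exact hrε
  · -- crawford S = 0
    have hmem : (0 : ℝ) ∈ {r : ℝ | ∃ (x : X) (f : X →L[𝕜] 𝕜),
        ‖x‖ = 1 ∧ ‖f‖ = 1 ∧ f x = 1 ∧ r = ‖f (S x)‖} :=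
      ⟨x₀, f₀, hx₀, hf₀, hfx₀, by rw [hSx, norm_zero]⟩
    have hbdd : BddBelow {r : ℝ | ∃ (x : X) (f : X →L[𝕜] 𝕜),
        ‖x‖ = 1 ∧ ‖f‖ = 1 ∧ f x = 1 ∧ r = ‖f (S x)‖} :=
      ⟨0, fun r ⟨x, f, _, _, _, hr⟩ => hr ▸ norm_nonneg _⟩
    refine le_antisymm (csInf_le hbdd hmem) (le_csInf ⟨0, hmem⟩ ?_)
    rintro r ⟨x, f, _, _, _, hr⟩
    exact hr ▸ norm_nonneg _
  · refine ⟨x₀, f₀, hx₀, hf₀, hfx₀, ?_⟩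
    rw [hSx, norm_zero]
    -- crawford S = 0, proved as above
    have hmem : (0 : ℝ) ∈ {r : ℝ | ∃ (x : X) (f : X →L[𝕜] 𝕜),
        ‖x‖ = 1 ∧ ‖f‖ = 1 ∧ f x = 1 ∧ r = ‖f (S x)‖} :=
      ⟨x₀, f₀, hx₀, hf₀, hfx₀, by rw [hSx, norm_zero]⟩
    have hbdd : BddBelow {r : ℝ | ∃ (x : X) (f : X →L[𝕜] 𝕜),
        ‖x‖ = 1 ∧ ‖f‖ = 1 ∧ f x = 1 ∧ r = ‖f (S x)‖} :=
      ⟨0, fun r ⟨x, f, _, _, _, hr⟩ => hr ▸ norm_nonneg _⟩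
    refine le_antisymm (csInf_le hbdd hmem) (le_csInf ⟨0, hmem⟩ ?_)
    rintro r ⟨x, f, _, _, _, hr⟩
    exact hr ▸ norm_nonneg _
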